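/- arXiv:1612.01444 — 2 statements merged into one kernel-verified Lean document; each statement's English description precedes it below -/
import Mathlib

section
/- Let p and e be primes with p > 2 and e > 2, and let H = H(F_{p^e}) be the Heisenberg group with commutator subgroup H'. For every subgroup N ≤ H', the automorphism group Aut(H/N) acts transitively on the set of maximal subgroups of H/N: for any two maximal subgroups M₁, M₂ of H/N there exists φ ∈ Aut(H/N) with φ(M₁) = M₂. -/
/-- The Heisenberg group over a field `K`: underlying set `K × K × K` with
multiplication `(α,β,γ)·(α',β',γ') = (α+α', β+β', γ+γ'+α·β')`. -/
def Heisenberg (K : Type) [Field K] : Type := K × K × K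

namespace Heisenberg

variable {K : Type} [Field K]

instance : Mul (Heisenberg K) :=
  ⟨fun a b => (a.1 + b.1, a.2.1 + b.2.1, a.2.2 + b.2.2 + a.1 * b.2.1)⟩

instance : One (Heisenberg K) := ⟨((0 : K), (0 : K), (0 : K))⟩

instance : Inv (Heisenberg K) :=
  ⟨fun a => (-a.1, -a.2.1, -a.2.2 + a.1 * a.2.1)⟩

lemma mul_def (a b : Heisenberg K) :
    a * b = (a.1 + b.1, a.2.1 + b.2.1, a.2.2 + b.2.2 + a.1 * b.2.1) := rfl

lemma one_def : (1 : Heisenberg K) = ((0 : K), (0 : K), (0 : K)) := rfl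

lemma inv_def (a : Heisenberg K) : a⁻¹ = (-a.1, -a.2.1, -a.2.2 + a.1 * a.2.1) := rfl

instance : Group (Heisenberg K) where
  mul := (· * ·)
  one := 1
  inv := (·⁻¹)
  mul_assoc a b c := by
    show (a * b) * c = a * (b * c)
    simp only [mul_def]
    refine Prod.ext ?_ (Prod.ext ?_ ?_) <;> (try erw [mul_def]) <;> (try erw [mul_def]) <;> dsimp <;> ring
  one_mul a := by
    show 1 * a = a
    simp only [mul_def, one_def]
    refine Prod.ext ?_ (Prod.ext ?_ ?_) <;> (try erw [mul_def]) <;> (try erw [mul_def]) <;> dsimp <;> ring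
  mul_one a := by
    show a * 1 = a
    simp only [mul_def, one_def]
    refine Prod.ext ?_ (Prod.ext ?_ ?_) <;> (try erw [mul_def]) <;> (try erw [mul_def]) <;> dsimp <;> ring
  inv_mul_cancel a := by
    show a⁻¹ * a = 1
    simp only [mul_def, one_def, inv_def]
    refine Prod.ext ?_ (Prod.ext ?_ ?_) <;> (try erw [mul_def]) <;> (try erw [mul_def]) <;> dsimp <;> ring

instance [Finite K] : Finite (Heisenberg K) := inferInstanceAs (Finite (K × K × K))

end Heisenberg
set_option maxHeartbeats 1000000 in
section
variable {K : Type} [Field K]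
open Heisenberg

/-- projection to abelianization -/
def Heis.pr : Heisenberg K →* Multiplicative (K × K) where
  toFun h := Multiplicative.ofAdd (h.1, h.2.1)
  map_one' := rfl
  map_mul' a b := rfl

lemma Heis.pr_apply (h : Heisenberg K) : Heis.pr h = Multiplicative.ofAdd (h.1, h.2.1) := rfl

lemma Heis.mem_ker_pr (h : Heisenberg K) : h ∈ Heis.pr.ker ↔ h.1 = 0 ∧ h.2.1 = 0 := by
  constructor
  · intro hh
    have : (h.1, h.2.1) = ((0:K), (0:K)) := hh
    exact ⟨congrArg Prod.fst this, congrArg Prod.snd this⟩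
  · intro ⟨h1, h2⟩
    show Multiplicative.ofAdd _ = _
    rw [h1, h2]; rfl
end
namespace Heis
variable {K : Type} [Field K]

/-- Constructor for Heisenberg group elements (pins down the right instances). -/
def mk3 (x y z : K) : Heisenberg K := (x, y, z)

@[simp] lemma mk3_fst (x y z : K) : (mk3 x y z).1 = x := rfl
@[simp] lemma mk3_snd (x y z : K) : (mk3 x y z).2.1 = y := rfl
@[simp] lemma mk3_thd (x y z : K) : (mk3 x y z).2.2 = z := rfl

lemma mk3_eta (h : Heisenberg K) : mk3 h.1 h.2.1 h.2.2 = h := rfl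

lemma mk3_mul (x y z x' y' z' : K) :
    mk3 x y z * mk3 x' y' z' = mk3 (x + x') (y + y') (z + z' + x * y') := rfl

lemma mk3_inv (x y z : K) : (mk3 x y z)⁻¹ = mk3 (-x) (-y) (-z + x * y) := rfl

lemma mk3_one : (1 : Heisenberg K) = mk3 0 0 0 := rfl

lemma mk3_congr {x y z x' y' z' : K} (h1 : x = x') (h2 : y = y') (h3 : z = z') :
    mk3 x y z = mk3 x' y' z' := by rw [h1, h2, h3]

lemma mk3_mem_ker_pr (x y z : K) : mk3 x y z ∈ (Heis.pr (K := K)).ker ↔ x = 0 ∧ y = 0 :=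
  Heis.mem_ker_pr _

end Heis
namespace Heis
variable {K : Type} [Field K]

lemma commutator_le_ker_pr : commutator (Heisenberg K) ≤ (Heis.pr (K := K)).ker :=
  Abelianization.commutator_subset_ker _

lemma central_of_mem_ker_pr {z : Heisenberg K} (hz : z ∈ (Heis.pr (K := K)).ker)
    (g : Heisenberg K) : z * g = g * z := by
  obtain ⟨h1, h2⟩ := (Heis.mem_ker_pr z).1 hz
  show z * g = g * z
  refine Prod.ext ?_ (Prod.ext ?_ ?_) <;>
    simp only [Heisenberg.mul_def, h1, h2] <;> ring

lemma ker_pr_le_commutator : (Heis.pr (K := K)).ker ≤ commutator (Heisenberg K) := by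
  intro h hh
  obtain ⟨h1, h2⟩ := (Heis.mem_ker_pr h).1 hh
  set x : Heisenberg K := ((1:K),(0:K),(0:K)) with hx
  set y : Heisenberg K := ((0:K), h.2.2, (0:K)) with hy
  have hmem : x * y * x⁻¹ * y⁻¹ ∈ ⁅(⊤ : Subgroup (Heisenberg K)), ⊤⁆ :=
    Subgroup.commutator_mem_commutator (Subgroup.mem_top x) (Subgroup.mem_top y)
  have : h = x * y * x⁻¹ * y⁻¹ := by
    refine Prod.ext ?_ (Prod.ext ?_ ?_) <;>
      simp only [hx, hy, Heisenberg.mul_def, Heisenberg.inv_def, h1, h2] <;>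
        erw [Heisenberg.mul_def, Heisenberg.inv_def, Heisenberg.inv_def, Heisenberg.mul_def] <;>
        dsimp only <;> ring
  rw [commutator_def, this]
  exact hmem

/-- The SL₂-type automorphism of the Heisenberg group. `r` is a half. -/
def phi (r a b c d : K) (hr : r + r = 1) (hdet : a * d - b * c = 1) :
    Heisenberg K ≃* Heisenberg K where
  toFun u := (a*u.1 + c*u.2.1, b*u.1 + d*u.2.1,
      u.2.2 + r*a*b*u.1^2 + r*c*d*u.2.1^2 + b*c*u.1*u.2.1)
  invFun u := (d*u.1 - c*u.2.1, -b*u.1 + a*u.2.1,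
      u.2.2 - r*b*d*u.1^2 - r*a*c*u.2.1^2 + b*c*u.1*u.2.1)
  left_inv u := by
    refine Prod.ext ?_ (Prod.ext ?_ ?_) <;> dsimp
    · linear_combination u.1 * hdet
    · linear_combination u.2.1 * hdet
    · linear_combination (-(r*a*b*u.1^2 + r*c*d*u.2.1^2 + b*c*u.1*u.2.1)) * hdet +
        (-(a*b^2*c*u.1^2) - b*c^2*d*u.2.1^2 - 2*a*b*c*d*u.1*u.2.1) * hr
  right_inv u := by
    refine Prod.ext ?_ (Prod.ext ?_ ?_) <;> dsimp
    · linear_combination u.1 * hdet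
    · linear_combination u.2.1 * hdet
    · linear_combination (r*b*d*u.1^2 + r*a*c*u.2.1^2 - b*c*u.1*u.2.1) * hdet +
        (b^2*c*d*u.1^2 + a*b*c^2*u.2.1^2 - 2*a*b*c*d*u.1*u.2.1) * hr
  map_mul' u v := by
    show _ = (_ : Heisenberg K) * _
    refine Prod.ext ?_ (Prod.ext ?_ ?_) <;> simp only [Heisenberg.mul_def] <;>
      erw [Heisenberg.mul_def] <;> dsimp only
    · ring
    · ring
    · linear_combination (-(u.1 * v.2.1)) * hdet + (a*b*u.1*v.1 + c*d*u.2.1*v.2.1) * hr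

lemma phi_fix {r a b c d : K} (hr : r + r = 1) (hdet : a * d - b * c = 1) {u : Heisenberg K}
    (h1 : u.1 = 0) (h2 : u.2.1 = 0) : phi r a b c d hr hdet u = u := by
  show ((_ : K), (_ : K), (_ : K)) = u
  refine Prod.ext ?_ (Prod.ext ?_ ?_) <;> simp [h1, h2]

lemma phi_apply (r a b c d : K) (hr : r + r = 1) (hdet : a * d - b * c = 1) (u : Heisenberg K) :
    phi r a b c d hr hdet u = (a*u.1 + c*u.2.1, b*u.1 + d*u.2.1,
      u.2.2 + r*a*b*u.1^2 + r*c*d*u.2.1^2 + b*c*u.1*u.2.1) := rfl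

lemma phi_symm_apply (r a b c d : K) (hr : r + r = 1) (hdet : a * d - b * c = 1)
    (u : Heisenberg K) :
    (phi r a b c d hr hdet).symm u = (d*u.1 - c*u.2.1, -b*u.1 + a*u.2.1,
      u.2.2 - r*b*d*u.1^2 - r*a*c*u.2.1^2 + b*c*u.1*u.2.1) := rfl

end Heis
section Helpers
variable {K : Type} [Field K]

/-- SL₂ transitivity on nonzero pairs, in the matrix-entry form we need. -/
lemma exists_sl2_entries (α β α' β' : K) (h : ¬(α = 0 ∧ β = 0)) (h' : ¬(α' = 0 ∧ β' = 0)) :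
    ∃ e f g h : K, e * h - f * g = 1 ∧ e * α + f * β = α' ∧ g * α + h * β = β' := by
  by_cases hα : α = 0
  · have hβ : β ≠ 0 := fun hb => h ⟨hα, hb⟩
    by_cases hα' : α' = 0
    · have hβ' : β' ≠ 0 := fun hb => h' ⟨hα', hb⟩
      exact ⟨β/β', 0, 0, β'/β, by field_simp; ring, by simp [hα, hα'], by field_simp [hα]; ring⟩
    · exact ⟨0, α'/β, -β/α', β'/β, by field_simp; ring, by simp [hα]; field_simp,
        by field_simp [hα]; simp [hα]⟩
  · by_cases hα' : α' = 0
    · have hβ' : β' ≠ 0 := fun hb => h' ⟨hα', hb⟩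
      exact ⟨β/β', -α/β', β'/α, 0, by field_simp; ring, by simp [hα']; field_simp; ring,
        by field_simp; ring⟩
    · exact ⟨α'/α, 0, β'/α - β/α', α/α', by field_simp; ring, by field_simp; ring,
        by field_simp; ring⟩

variable (F : Type) [Field F] [Algebra F K] [FiniteDimensional F K]

/-- the `F`-dual of `K` is one-dimensional over `K`: every functional is a twist of
a fixed nonzero one. -/
lemma dual_rep (t : K →ₗ[F] F) (ht : t ≠ 0) (f : K →ₗ[F] F) :
    ∃ α : K, ∀ x, f x = t (α * x) := by
  let Λ : K →ₗ[F] (K →ₗ[F] F) :=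
    { toFun := fun α => t.comp (LinearMap.mulLeft F α)
      map_add' := by
        intro α α'; ext x
        simp [LinearMap.mulLeft, add_mul]
      map_smul' := by
        intro c α; ext x
        simp [LinearMap.mulLeft, smul_mul_assoc] }
  have hinj : Function.Injective Λ := by
    rw [injective_iff_map_eq_zero]
    intro α hα
    by_contra hα0
    apply ht
    ext y
    have := congrArg (fun (g : K →ₗ[F] F) => g (α⁻¹ * y)) hα
    simpa [Λ, LinearMap.mulLeft, ← mul_assoc, mul_inv_cancel₀ hα0] using this
  have hfr : Module.finrank F K = Module.finrank F (K →ₗ[F] F) :=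
    (Subspace.dual_finrank_eq (K := F) (V := K)).symm
  have hsurj : Function.Surjective Λ :=
    (LinearMap.injective_iff_surjective_of_finrank_eq_finrank hfr).1 hinj
  obtain ⟨α, hα⟩ := hsurj f
  exact ⟨α, fun x => by rw [← hα]; rfl⟩

/-- A coatom submodule is the kernel of a linear functional. -/
lemma coatom_ker_functional {M : Type*} [AddCommGroup M] [Module F M]
    {W : Submodule F M} (hW : IsCoatom W) : ∃ ℓ : M →ₗ[F] F, LinearMap.ker ℓ = W := by
  obtain ⟨hWne, hWmax⟩ := hW
  obtain ⟨v, hv⟩ : ∃ v, v ∉ W := by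
    by_contra hc
    push_neg at hc
    exact hWne (eq_top_iff.2 fun x _ => hc x)
  have hsup : W ⊔ Submodule.span F {v} = ⊤ := by
    apply hWmax
    refine lt_of_le_of_ne le_sup_left fun hEq => hv ?_
    have : v ∈ W ⊔ Submodule.span F {v} :=
      (le_sup_right : Submodule.span F {v} ≤ _) (Submodule.mem_span_singleton_self v)
    rwa [← hEq] at this
  set vb : M ⧸ W := W.mkQ v with hvb
  have hvb0 : vb ≠ 0 := by
    simpa [hvb, Submodule.Quotient.mk_eq_zero] using hv
  let ψ : F →ₗ[F] M ⧸ W := LinearMap.toSpanSingleton F _ vb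
  have hinj : Function.Injective ψ := by
    rw [← LinearMap.ker_eq_bot]
    exact LinearMap.ker_toSpanSingleton F hvb0
  have hsurj : Function.Surjective ψ := by
    rw [← LinearMap.range_eq_top, ← LinearMap.span_singleton_eq_range]
    have h1 : Submodule.map W.mkQ (W ⊔ Submodule.span F {v}) = ⊤ := by
      rw [hsup, Submodule.map_top, Submodule.range_mkQ]
    rw [Submodule.map_sup, Submodule.map_span, Set.image_singleton] at h1
    have h2 : Submodule.map W.mkQ W = ⊥ := by
      rw [eq_bot_iff]
      rintro x ⟨w, hw, rfl⟩
      simpa using (Submodule.Quotient.mk_eq_zero W).2 hw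
    rw [h2, bot_sup_eq] at h1
    exact h1
  set E := LinearEquiv.ofBijective ψ ⟨hinj, hsurj⟩ with hE
  refine ⟨E.symm.toLinearMap ∘ₗ W.mkQ, ?_⟩
  ext x
  simp only [LinearMap.mem_ker, LinearMap.comp_apply, LinearEquiv.coe_coe]
  rw [map_eq_zero_iff _ E.symm.injective]
  exact Submodule.Quotient.mk_eq_zero W
end Helpers
namespace Heis
open Pointwise
variable {K : Type} [Field K] (N : Subgroup (Heisenberg K)) [N.Normal]

/-- The image in `H ⧸ N` of the "vertical" central line of `H`. -/
def Z : Subgroup (Heisenberg K ⧸ N) :=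
  Subgroup.map (QuotientGroup.mk' N) (Heis.pr (K := K)).ker

lemma Z_central : ∀ z ∈ Z N, ∀ g : Heisenberg K ⧸ N, z * g = g * z := by
  rintro z ⟨h, hh, rfl⟩ g
  induction g using QuotientGroup.induction_on with
  | H g =>
    show QuotientGroup.mk' N h * QuotientGroup.mk' N g
        = QuotientGroup.mk' N g * QuotientGroup.mk' N h
    rw [← map_mul, ← map_mul, central_of_mem_ker_pr hh g]

lemma Z_le_commutator : Z N ≤ commutator (Heisenberg K ⧸ N) := by
  have h1 : Z N ≤ Subgroup.map (QuotientGroup.mk' N) (commutator (Heisenberg K)) :=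
    Subgroup.map_mono ker_pr_le_commutator
  refine h1.trans ?_
  rw [commutator_def, commutator_def, Subgroup.map_commutator]
  exact Subgroup.commutator_mono le_top le_top

lemma Z_le_of_coatom {M : Subgroup (Heisenberg K ⧸ N)} (hM : IsCoatom M) : Z N ≤ M := by
  by_contra hc
  -- M ⊔ Z = ⊤
  have hlt : M < M ⊔ Z N := left_lt_sup.2 hc
  have htop : M ⊔ Z N = ⊤ := hM.2 _ hlt
  -- Z is normal
  haveI hZnormal : (Z N).Normal := by
    constructor
    intro z hz g
    rw [← Z_central N z hz g, mul_assoc, mul_inv_cancel, mul_one]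
    exact hz
  -- M is normal
  haveI hMnormal : M.Normal := by
    rw [← Subgroup.normalizer_eq_top_iff]
    rw [eq_top_iff, ← htop, sup_le_iff]
    constructor
    · exact Subgroup.le_normalizer
    · intro z hz
      rw [Subgroup.mem_normalizer_iff]
      intro g
      constructor
      · intro hg
        have : z * g * z⁻¹ = g := by
          rw [Z_central N z hz g, mul_assoc, mul_inv_cancel, mul_one]
        rwa [this]
      · intro hg
        have : z * g * z⁻¹ = g := by
          rw [Z_central N z hz g, mul_assoc, mul_inv_cancel, mul_one]
        rwa [this] at hg
  -- every coset mod M is represented by an element of Z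
  have hrep : ∀ g : Heisenberg K ⧸ N, ∃ z ∈ Z N,
      QuotientGroup.mk' M g = QuotientGroup.mk' M z := by
    intro g
    have hg : g ∈ M ⊔ Z N := htop ▸ Subgroup.mem_top g
    have hg' : g ∈ ((M : Set (Heisenberg K ⧸ N)) * ((Z N : Subgroup _) : Set (Heisenberg K ⧸ N))) := by
      rw [← Subgroup.mul_normal M (Z N)]; exact hg
    obtain ⟨m, hm, z, hz, rfl⟩ := hg'
    refine ⟨z, hz, ?_⟩
    rw [map_mul]
    have : QuotientGroup.mk' M m = 1 := (QuotientGroup.eq_one_iff m).2 hm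
    rw [this, one_mul]
  -- the quotient by M is commutative
  letI : CommGroup ((Heisenberg K ⧸ N) ⧸ M) :=
    { QuotientGroup.Quotient.group M with
      mul_comm := by
        intro q q'
        induction q using QuotientGroup.induction_on with
        | H g =>
          induction q' using QuotientGroup.induction_on with
          | H g' =>
            obtain ⟨z, hz, hzg⟩ := hrep g
            obtain ⟨z', hz', hzg'⟩ := hrep g'
            show QuotientGroup.mk' M g * QuotientGroup.mk' M g'
                = QuotientGroup.mk' M g' * QuotientGroup.mk' M g
            rw [hzg, hzg', ← map_mul, ← map_mul, Z_central N z hz z'] }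
  have hcomm : commutator (Heisenberg K ⧸ N) ≤ M := by
    have := Abelianization.commutator_subset_ker (QuotientGroup.mk' M)
    rwa [QuotientGroup.ker_mk'] at this
  exact hc ((Z_le_commutator N).trans hcomm)

end Heis
namespace Heis
variable {K : Type} [Field K] {p : ℕ} [Algebra (ZMod p) K]
variable (N : Subgroup (Heisenberg K)) [N.Normal]

/-- The character of `H` attached to a functional `t` and coefficients `α β`. -/
def chiH (t : K →ₗ[ZMod p] ZMod p) (α β : K) : Heisenberg K →* Multiplicative (ZMod p) where
  toFun h := Multiplicative.ofAdd (t (α * h.1 + β * h.2.1))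
  map_one' := by
    show Multiplicative.ofAdd (t (α * 0 + β * 0)) = 1
    simp
  map_mul' u v := by
    show Multiplicative.ofAdd (t (α * (u.1 + v.1) + β * (u.2.1 + v.2.1))) = _
    rw [← ofAdd_add, ← map_add]
    congr 2
    ring

/-- The induced character of `H ⧸ N`. -/
def chi (hN : N ≤ commutator (Heisenberg K)) (t : K →ₗ[ZMod p] ZMod p) (α β : K) :
    (Heisenberg K ⧸ N) →* Multiplicative (ZMod p) :=
  QuotientGroup.lift N (chiH t α β)
    (hN.trans (Abelianization.commutator_subset_ker (chiH t α β)))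

lemma chi_mk (hN : N ≤ commutator (Heisenberg K)) (t : K →ₗ[ZMod p] ZMod p) (α β : K)
    (h : Heisenberg K) :
    chi N hN t α β (QuotientGroup.mk h) = Multiplicative.ofAdd (t (α * h.1 + β * h.2.1)) :=
  rfl

lemma map_phi_N (hN : N ≤ commutator (Heisenberg K)) {r a b c d : K}
    (hr : r + r = 1) (hdet : a * d - b * c = 1) :
    Subgroup.map (↑(phi r a b c d hr hdet) : Heisenberg K →* Heisenberg K) N = N := by
  have hfix : ∀ n ∈ N, phi r a b c d hr hdet n = n := by
    intro n hn
    obtain ⟨h1, h2⟩ := (Heis.mem_ker_pr n).1 (commutator_le_ker_pr (hN hn))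
    exact phi_fix hr hdet h1 h2
  ext g
  constructor
  · rintro ⟨n, hn, rfl⟩
    show phi r a b c d hr hdet n ∈ N
    rwa [hfix n hn]
  · intro hg
    exact ⟨g, hg, hfix g hg⟩

/-- The induced automorphism of `H ⧸ N`. -/
def psi (hN : N ≤ commutator (Heisenberg K)) {r a b c d : K}
    (hr : r + r = 1) (hdet : a * d - b * c = 1) :
    (Heisenberg K ⧸ N) ≃* (Heisenberg K ⧸ N) :=
  QuotientGroup.congr N N (phi r a b c d hr hdet) (map_phi_N N hN hr hdet)

lemma chi_comp_psi (hN : N ≤ commutator (Heisenberg K)) (t : K →ₗ[ZMod p] ZMod p)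
    {r a b c d : K} (hr : r + r = 1) (hdet : a * d - b * c = 1) (α' β' : K)
    (g : Heisenberg K ⧸ N) :
    chi N hN t α' β' (psi N hN hr hdet g) =
      chi N hN t (a * α' + b * β') (c * α' + d * β') g := by
  induction g using QuotientGroup.induction_on with
  | H h =>
    have h1 : psi N hN hr hdet (QuotientGroup.mk h)
        = QuotientGroup.mk (phi r a b c d hr hdet h) := rfl
    rw [h1, chi_mk, chi_mk]
    congr 2
    show α' * (a*h.1 + c*h.2.1) + β' * (b*h.1 + d*h.2.1) = _
    ring

lemma map_psi_ker (hN : N ≤ commutator (Heisenberg K)) (t : K →ₗ[ZMod p] ZMod p)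
    {r a b c d : K} (hr : r + r = 1) (hdet : a * d - b * c = 1) (α' β' : K) :
    Subgroup.map (psi N hN hr hdet).toMonoidHom
        (chi N hN t (a * α' + b * β') (c * α' + d * β')).ker =
      (chi N hN t α' β').ker := by
  have hker : (chi N hN t (a * α' + b * β') (c * α' + d * β')).ker =
      Subgroup.comap (psi N hN hr hdet).toMonoidHom (chi N hN t α' β').ker := by
    ext g
    rw [Subgroup.mem_comap, MonoidHom.mem_ker, MonoidHom.mem_ker]
    have : (psi N hN hr hdet).toMonoidHom g = psi N hN hr hdet g := rfl
    rw [this, chi_comp_psi N hN t hr hdet]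
  rw [hker, Subgroup.map_comap_eq_self_of_surjective]
  exact (psi N hN hr hdet).surjective

end Heis
namespace Heis
variable {K : Type} [Field K] (N : Subgroup (Heisenberg K)) [N.Normal]

lemma mk3_central_mem (x : K) :
    QuotientGroup.mk' N (mk3 0 0 x) ∈ Z N :=
  ⟨mk3 0 0 x, (mk3_mem_ker_pr 0 0 x).2 ⟨rfl, rfl⟩, rfl⟩

/-- The additive subgroup of `K × K` corresponding to a subgroup `M` of `H ⧸ N`
containing the central line. -/
def Wsub (M : Subgroup (Heisenberg K ⧸ N)) (hZ : Z N ≤ M) : AddSubgroup (K × K) where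
  carrier := {v | QuotientGroup.mk' N (mk3 v.1 v.2 0) ∈ M}
  zero_mem' := by
    show QuotientGroup.mk' N (mk3 0 0 0) ∈ M
    rw [← mk3_one, map_one]
    exact M.one_mem
  add_mem' := by
    intro v w hv hw
    show QuotientGroup.mk' N (mk3 (v.1 + w.1) (v.2 + w.2) 0) ∈ M
    have h1 : mk3 (v.1 + w.1) (v.2 + w.2) (0:K)
        = mk3 v.1 v.2 0 * mk3 w.1 w.2 0 * mk3 0 0 (-(v.1 * w.2)) := by
      rw [mk3_mul, mk3_mul]
      exact mk3_congr (by ring) (by ring) (by ring)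
    rw [h1, map_mul, map_mul]
    exact M.mul_mem (M.mul_mem hv hw) (hZ (mk3_central_mem N _))
  neg_mem' := by
    intro v hv
    show QuotientGroup.mk' N (mk3 (-v.1) (-v.2) 0) ∈ M
    have h1 : mk3 (-v.1) (-v.2) (0:K)
        = (mk3 v.1 v.2 0)⁻¹ * mk3 0 0 (-(v.1 * v.2)) := by
      rw [mk3_inv, mk3_mul]
      exact mk3_congr (by ring) (by ring) (by ring)
    rw [h1, map_mul, map_inv]
    exact M.mul_mem (M.inv_mem hv) (hZ (mk3_central_mem N _))

lemma mem_Wsub (M : Subgroup (Heisenberg K ⧸ N)) (hZ : Z N ≤ M) (v : K × K) :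
    v ∈ Wsub N M hZ ↔ QuotientGroup.mk' N (mk3 v.1 v.2 0) ∈ M := Iff.rfl

/-- The subgroup of `H ⧸ N` corresponding to an additive subgroup of `K × K`. -/
def MUsub (U : AddSubgroup (K × K)) : Subgroup (Heisenberg K ⧸ N) where
  carrier := {g | ∃ h : Heisenberg K, QuotientGroup.mk' N h = g ∧ (h.1, h.2.1) ∈ U}
  one_mem' := ⟨1, map_one _, U.zero_mem⟩
  mul_mem' := by
    rintro _ _ ⟨h, rfl, hU1⟩ ⟨h', rfl, hU2⟩
    exact ⟨h * h', map_mul _ _ _, U.add_mem hU1 hU2⟩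
  inv_mem' := by
    rintro _ ⟨h, rfl, hU1⟩
    exact ⟨h⁻¹, map_inv _ _, U.neg_mem hU1⟩

lemma coords_eq_of_mk_eq {h h' : Heisenberg K} (hN : N ≤ commutator (Heisenberg K))
    (heq : QuotientGroup.mk' N h = QuotientGroup.mk' N h') :
    h.1 = h'.1 ∧ h.2.1 = h'.2.1 := by
  obtain ⟨z, hz, hzz⟩ := (QuotientGroup.mk'_eq_mk' N).1 heq
  obtain ⟨hz1, hz2⟩ := (mem_ker_pr z).1 (commutator_le_ker_pr (hN hz))
  constructor
  · have := congrArg (fun w : Heisenberg K => w.1) hzz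
    simp only [Heisenberg.mul_def] at this
    rw [hz1, add_zero] at this
    exact this
  · have := congrArg (fun w : Heisenberg K => w.2.1) hzz
    simp only [Heisenberg.mul_def] at this
    rw [hz2, add_zero] at this
    exact this

lemma mem_M_iff_Wsub (M : Subgroup (Heisenberg K ⧸ N)) (hZ : Z N ≤ M) (h : Heisenberg K) :
    QuotientGroup.mk' N h ∈ M ↔ (h.1, h.2.1) ∈ Wsub N M hZ := by
  have hsplit : h = mk3 h.1 h.2.1 0 * mk3 0 0 h.2.2 := by
    rw [mk3_mul]
    rw [show mk3 (h.1 + 0) (h.2.1 + 0) (0 + h.2.2 + h.1 * 0)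
        = mk3 h.1 h.2.1 h.2.2 from mk3_congr (by ring) (by ring) (by ring)]
    exact (mk3_eta h).symm
  rw [mem_Wsub]
  conv_lhs => rw [hsplit]
  rw [map_mul]
  exact M.mul_mem_cancel_right (hZ (mk3_central_mem N _))

lemma Wsub_isCoatom (hN : N ≤ commutator (Heisenberg K)) {M : Subgroup (Heisenberg K ⧸ N)}
    (hM : IsCoatom M) (hZ : Z N ≤ M) : IsCoatom (Wsub N M hZ) := by
  constructor
  · -- W ≠ ⊤
    intro htop
    apply hM.1
    rw [eq_top_iff]
    intro g _
    obtain ⟨h, rfl⟩ := QuotientGroup.mk'_surjective N g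
    rw [mem_M_iff_Wsub N M hZ h, htop]
    trivial
  · intro U hU
    have hMle : M ≤ MUsub N U := by
      intro g hg
      obtain ⟨h, rfl⟩ := QuotientGroup.mk'_surjective N g
      exact ⟨h, rfl, hU.le ((mem_M_iff_Wsub N M hZ h).1 hg)⟩
    obtain ⟨u, huU, huW⟩ := SetLike.exists_of_lt hU
    have hMne : M ≠ MUsub N U := by
      intro hEq
      apply huW
      rw [mem_Wsub]
      have hmem : QuotientGroup.mk' N (mk3 u.1 u.2 0) ∈ MUsub N U :=
        ⟨mk3 u.1 u.2 0, rfl, huU⟩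
      rw [← hEq] at hmem
      exact hmem
    have htopMU : MUsub N U = ⊤ := hM.2 _ (lt_of_le_of_ne hMle hMne)
    rw [eq_top_iff]
    intro v _
    have hv : QuotientGroup.mk' N (mk3 v.1 v.2 0) ∈ MUsub N U := by
      rw [htopMU]; trivial
    obtain ⟨h, hπ, hU3⟩ := hv
    obtain ⟨h1, h2⟩ := coords_eq_of_mk_eq N hN hπ
    have hveq : v = (h.1, h.2.1) := by
      rw [h1, h2]
      exact rfl
    rw [hveq]
    exact hU3

end Heis
namespace Heis
variable {K : Type} [Field K] [Finite K] {p : ℕ} [Fact p.Prime] [Algebra (ZMod p) K]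
variable (N : Subgroup (Heisenberg K)) [N.Normal]

lemma coatom_classify (hN : N ≤ commutator (Heisenberg K))
    (t : K →ₗ[ZMod p] ZMod p) (ht : t ≠ 0)
    {M : Subgroup (Heisenberg K ⧸ N)} (hM : IsCoatom M) :
    ∃ α β : K, ¬(α = 0 ∧ β = 0) ∧ M = (chi N hN t α β).ker := by
  have hZ : Z N ≤ M := Z_le_of_coatom N hM
  set W := Wsub N M hZ with hWdef
  have hWc : IsCoatom W := Wsub_isCoatom N hN hM hZ
  set W' := AddSubgroup.toZModSubmodule p W with hW'def
  have hW'c : IsCoatom W' := ((AddSubgroup.toZModSubmodule p).isCoatom_iff W).2 hWc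
  obtain ⟨ℓ, hℓ⟩ := coatom_ker_functional (ZMod p) hW'c
  obtain ⟨α, hα⟩ := dual_rep (ZMod p) t ht (ℓ.comp (LinearMap.inl (ZMod p) K K))
  obtain ⟨β, hβ⟩ := dual_rep (ZMod p) t ht (ℓ.comp (LinearMap.inr (ZMod p) K K))
  have hdecomp : ∀ v : K × K, ℓ v = t (α * v.1 + β * v.2) := by
    intro v
    have hsplit : ℓ v = ℓ (v.1, (0:K)) + ℓ ((0:K), v.2) := by
      rw [← map_add]
      congr 1
      ext <;> simp
    have h1 : ℓ (v.1, (0:K)) = t (α * v.1) := hα v.1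
    have h2 : ℓ ((0:K), v.2) = t (β * v.2) := hβ v.2
    rw [hsplit, h1, h2, ← map_add]
  have hne : ¬(α = 0 ∧ β = 0) := by
    rintro ⟨rfl, rfl⟩
    apply hW'c.1
    rw [← hℓ, eq_top_iff]
    intro v _
    rw [LinearMap.mem_ker, hdecomp]
    simp
  refine ⟨α, β, hne, ?_⟩
  ext g
  obtain ⟨h, rfl⟩ := QuotientGroup.mk'_surjective N g
  rw [MonoidHom.mem_ker, mem_M_iff_Wsub N M hZ h]
  have hker : ((h.1, h.2.1) : K × K) ∈ W ↔ t (α * h.1 + β * h.2.1) = 0 := by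
    have hWW' : ((h.1, h.2.1) : K × K) ∈ W ↔ ((h.1, h.2.1) : K × K) ∈ W' :=
      (AddSubgroup.mem_toZModSubmodule p).symm
    rw [hWW', ← hℓ, LinearMap.mem_ker, hdecomp]
  rw [hker]
  show _ ↔ chi N hN t α β (QuotientGroup.mk h) = 1
  rw [chi_mk, ofAdd_eq_one]

end Heis
/-- For every subgroup `N ≤ H'` of the Heisenberg group
`H = H(F_{p^e})`, the automorphism group of `H/N` acts transitively on the maximal
subgroups of `H/N`. -/
theorem heisenberg_quotient_aut_transitive_on_maximal
    (p e : ℕ) (hp : p.Prime) (he : e.Prime) (hp2 : 2 < p) (he2 : 2 < e)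
    (K : Type) [Field K] [Fintype K] (hK : Fintype.card K = p ^ e)
    (N : Subgroup (Heisenberg K)) [N.Normal]
    (hN : N ≤ commutator (Heisenberg K)) :
    ∀ M₁ M₂ : Subgroup (Heisenberg K ⧸ N), IsCoatom M₁ → IsCoatom M₂ →
      ∃ φ : (Heisenberg K ⧸ N) ≃* (Heisenberg K ⧸ N),
        Subgroup.map φ.toMonoidHom M₁ = M₂ := by
  intro M₁ M₂ hM₁ hM₂
  haveI : Fact p.Prime := ⟨hp⟩
  -- the characteristic of K is p
  have hchar : ringChar K = p := by
    obtain ⟨n, hrp, hcard⟩ := FiniteField.card K (ringChar K)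
    rw [hK] at hcard
    have h1 : ringChar K ∣ p ^ e := by
      rw [hcard]
      exact dvd_pow_self _ (Nat.pos_iff_ne_zero.mp n.pos)
    exact (Nat.prime_dvd_prime_iff_eq hrp hp).1 (hrp.dvd_of_dvd_pow h1)
  haveI : CharP K p := hchar ▸ ringChar.charP K
  letI : Algebra (ZMod p) K := ZMod.algebra K p
  -- 2 is invertible in K
  have h2K : (2 : K) ≠ 0 := by
    intro h20
    have hdvd : p ∣ 2 := (CharP.cast_eq_zero_iff K p 2).1 h20
    have := Nat.le_of_dvd (by norm_num) hdvd
    omega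
  have hr : (2 : K)⁻¹ + (2 : K)⁻¹ = 1 := by
    rw [← two_mul]
    exact mul_inv_cancel₀ h2K
  -- a nonzero functional on K
  haveI : Nontrivial (Module.Dual (ZMod p) K) := by
    have h1 : 0 < Module.finrank (ZMod p) K := Module.finrank_pos
    have h2 : Module.finrank (ZMod p) (Module.Dual (ZMod p) K)
        = Module.finrank (ZMod p) K := Subspace.dual_finrank_eq
    exact Module.nontrivial_of_finrank_pos (R := ZMod p) (h2 ▸ h1)
  obtain ⟨t, ht⟩ := exists_ne (0 : Module.Dual (ZMod p) K)
  -- classify the two coatoms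
  obtain ⟨α₁, β₁, hne₁, hMeq₁⟩ := Heis.coatom_classify N hN t ht hM₁
  obtain ⟨α₂, β₂, hne₂, hMeq₂⟩ := Heis.coatom_classify N hN t ht hM₂
  -- find the SL₂ element
  obtain ⟨a, b, c, d, hdet, hab, hcd⟩ := exists_sl2_entries α₂ β₂ α₁ β₁ hne₂ hne₁
  refine ⟨Heis.psi N hN hr hdet, ?_⟩
  rw [hMeq₁, hMeq₂]
  have hmap := Heis.map_psi_ker N hN t hr hdet α₂ β₂
  rw [hab, hcd] at hmap
  exact hmap
end

section
/- Let p be a prime, let L_1, …, L_g be r×s matrices over Z_p, and let A be a g'×g matrix over Z_p. Then the map (a, b, c) ↦ (a, b, c·A^T) is a group homomorphism from B(L_1, …, L_g) to B(Σ_j A_{1j} L_j, …, Σ_j A_{g'j} L_j), and it is surjective whenever A has rank g'. -/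
open Matrix in
/-- The Brahana-Baer group `B(L 0, …, L (t-1))` determined by a family of `r × s`
matrices over `ZMod p`: underlying set `(ZMod p)^r × (ZMod p)^s × (ZMod p)^t` with
multiplication `(a,b,c)·(a',b',c') = (a+a', b+b', c+c'+(a L₁ b'ᵀ, …, a L_t b'ᵀ))`. -/
def BGroup (p r s t : ℕ) (L : Fin t → Matrix (Fin r) (Fin s) (ZMod p)) : Type :=
  (Fin r → ZMod p) × (Fin s → ZMod p) × (Fin t → ZMod p)

namespace BGroup

open Matrix

variable {p r s t : ℕ} {L : Fin t → Matrix (Fin r) (Fin s) (ZMod p)}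

instance : Mul (BGroup p r s t L) :=
  ⟨fun x y => (x.1 + y.1, x.2.1 + y.2.1,
    fun i => x.2.2 i + y.2.2 i + x.1 ⬝ᵥ (L i).mulVec y.2.1)⟩

instance : One (BGroup p r s t L) := ⟨(0, 0, 0)⟩

instance : Inv (BGroup p r s t L) :=
  ⟨fun x => (-x.1, -x.2.1, fun i => -x.2.2 i + x.1 ⬝ᵥ (L i).mulVec x.2.1)⟩

lemma mul_def (x y : BGroup p r s t L) :
    x * y = (x.1 + y.1, x.2.1 + y.2.1,
      fun i => x.2.2 i + y.2.2 i + x.1 ⬝ᵥ (L i).mulVec y.2.1) := rfl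

lemma one_def : (1 : BGroup p r s t L) = (0, 0, 0) := rfl

lemma inv_def (x : BGroup p r s t L) :
    x⁻¹ = (-x.1, -x.2.1, fun i => -x.2.2 i + x.1 ⬝ᵥ (L i).mulVec x.2.1) := rfl

lemma mul_assoc_aux (x y z : BGroup p r s t L) : (x * y) * z = x * (y * z) := by
  rw [mul_def, mul_def, mul_def, mul_def]
  refine Prod.ext ?_ (Prod.ext ?_ ?_) <;> dsimp only
  · abel
  · abel
  · funext i
    simp [Matrix.mulVec_add, dotProduct_add, add_dotProduct]
    ring

lemma one_mul_aux (x : BGroup p r s t L) : 1 * x = x := by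
  rw [mul_def, one_def]
  refine Prod.ext ?_ (Prod.ext ?_ ?_) <;> dsimp only
  · abel
  · abel
  · funext i
    simp [zero_dotProduct]

lemma mul_one_aux (x : BGroup p r s t L) : x * 1 = x := by
  rw [mul_def, one_def]
  refine Prod.ext ?_ (Prod.ext ?_ ?_) <;> dsimp only
  · abel
  · abel
  · funext i
    simp [Matrix.mulVec_zero]

lemma inv_mul_cancel_aux (x : BGroup p r s t L) : x⁻¹ * x = 1 := by
  rw [mul_def, one_def, inv_def]
  refine Prod.ext ?_ (Prod.ext ?_ ?_) <;> dsimp only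
  · abel
  · abel
  · funext i
    simp [neg_dotProduct]

instance : Group (BGroup p r s t L) where
  mul := (· * ·)
  one := 1
  inv := (·⁻¹)
  mul_assoc x y z := mul_assoc_aux x y z
  one_mul x := one_mul_aux x
  mul_one x := mul_one_aux x
  inv_mul_cancel x := inv_mul_cancel_aux x

instance [NeZero p] : Finite (BGroup p r s t L) :=
  inferInstanceAs (Finite (_ × _ × _))

end BGroup

/-- The natural projection `B(L_1, …, L_g) → B(Σ_j A_{1j} L_j, …, Σ_j A_{g'j} L_j)`,
`(a, b, c) ↦ (a, b, c·Aᵀ)`. -/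
def BGroup.proj (p r s g g' : ℕ) (L : Fin g → Matrix (Fin r) (Fin s) (ZMod p))
    (A : Matrix (Fin g') (Fin g) (ZMod p)) :
    BGroup p r s g L → BGroup p r s g' (fun i => ∑ j, A i j • L j) :=
  fun x => (x.1, x.2.1, A.mulVec x.2.2)

/-- The map `(a, b, c) ↦ (a, b, c·Aᵀ)` is a group homomorphism from
`B(L_1, …, L_g)` to `B(Σ_j A_{1j} L_j, …, Σ_j A_{g'j} L_j)`, surjective whenever
the `g' × g` matrix `A` has rank `g'`. -/
theorem bgroup_proj_hom_and_surjective
    (p : ℕ) (hp : p.Prime) (r s g g' : ℕ)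
    (L : Fin g → Matrix (Fin r) (Fin s) (ZMod p))
    (A : Matrix (Fin g') (Fin g) (ZMod p)) :
    (∀ x y : BGroup p r s g L,
      BGroup.proj p r s g g' L A (x * y) =
        BGroup.proj p r s g g' L A x * BGroup.proj p r s g g' L A y) ∧
    (A.rank = g' → Function.Surjective (BGroup.proj p r s g g' L A)) := by
  constructor
  · intro x y
    simp only [BGroup.proj, BGroup.mul_def]
    refine Prod.ext rfl (Prod.ext rfl ?_)
    funext i
    simp [Matrix.mulVec, dotProduct, Finset.mul_sum, Finset.sum_add_distrib,
      Matrix.sum_apply, Finset.sum_mul]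
    simp only [mul_add, Finset.sum_add_distrib]
    congr 1
    simp_rw [Finset.mul_sum]
    rw [Finset.sum_comm]
    refine Finset.sum_congr rfl fun j _ => ?_
    rw [Finset.sum_comm]
    simp only [Matrix.mulVec, dotProduct, Matrix.sum_apply, Matrix.smul_apply, smul_eq_mul,
      Finset.mul_sum, Finset.sum_mul]
    refine Finset.sum_congr rfl fun k _ => Finset.sum_congr rfl fun l _ => ?_
    ring
  · intro hrank
    haveI : Fact p.Prime := ⟨hp⟩
    have hsurj : Function.Surjective A.mulVecLin := by
      rw [← LinearMap.range_eq_top]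
      apply Submodule.eq_top_of_finrank_eq
      rw [← Matrix.rank, hrank, Module.finrank_pi, Fintype.card_fin]
    rintro ⟨a, b, c⟩
    obtain ⟨c₀, hc₀⟩ := hsurj c
    exact ⟨(a, b, c₀), Prod.ext rfl (Prod.ext rfl hc₀)⟩
end
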